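/- arXiv:1712.07617 — 5 statements merged into one kernel-verified Lean document; each statement's English description precedes it below -/
import Mathlib

section
/- Let ν̃ ∈ (−1/2, 1) and Δv > 0. Let f : ℤ³ → [0,∞) be such that ρ := Σ_{j∈ℤ³} f_j Δv³ satisfies 0 < ρ < ∞ and Σ_j f_j |v_j|² Δv³ < ∞, where v_j = jΔv ∈ ℝ³. Define U = (1/ρ)Σ_j f_j v_j Δv³, T = (1/(3ρ))Σ_j f_j |v_j − U|² Δv³, Θ = (1/ρ)Σ_j f_j (v_j − U)⊗(v_j − U) Δv³ (a real symmetric 3×3 matrix), and 𝒯_{ν̃} = (1−ν̃)T·Id + ν̃Θ. Then for every k ∈ ℝ³, min{1−ν̃, 1+2ν̃}·T·|k|² ≤ kᵀ𝒯_{ν̃}k ≤ max{1−ν̃, 1+2ν̃}·T·|k|². -/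
noncomputable section

open Real MeasureTheory

/-- Velocity space `ℝ³`. -/
abbrev V3 := Fin 3 → ℝ

/-- Velocity grid index set `ℤ³`. -/
abbrev Idx3 := Fin 3 → ℤ

/-- Euclidean norm on `V3`. -/
def enorm3 (v : V3) : ℝ := Real.sqrt (∑ a, v a ^ 2)

/-- The velocity grid node `v_j = jΔv`. -/
def gridV (Δv : ℝ) (j : Idx3) : V3 := fun a => (j a : ℝ) * Δv

/-- Quadratic form `kᵀ A k` of a 3×3 matrix. -/
def quadForm (A : Matrix (Fin 3) (Fin 3) ℝ) (k : V3) : ℝ := ∑ a, ∑ b, k a * A a b * k b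

/-- The ellipsoidal Gaussian with density `ρ`, bulk velocity `U` and temperature tensor `T`. -/
def gaussianM (ρ : ℝ) (U : V3) (T : Matrix (Fin 3) (Fin 3) ℝ) (v : V3) : ℝ :=
  ρ / Real.sqrt ((2 * π) ^ 3 * T.det) *
    Real.exp (-(1 / 2) * quadForm T⁻¹ (fun a => v a - U a))

/-- Discrete density. -/
def dRho (Δv : ℝ) (h : Idx3 → ℝ) : ℝ := ∑' j : Idx3, h j * Δv ^ 3

/-- Discrete bulk velocity. -/
def dU (Δv : ℝ) (h : Idx3 → ℝ) : V3 :=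
  fun a => (dRho Δv h)⁻¹ * ∑' j : Idx3, h j * gridV Δv j a * Δv ^ 3

/-- Discrete temperature. -/
def dT (Δv : ℝ) (h : Idx3 → ℝ) : ℝ :=
  (3 * dRho Δv h)⁻¹ * ∑' j : Idx3, h j * enorm3 (fun a => gridV Δv j a - dU Δv h a) ^ 2 * Δv ^ 3

/-- Discrete stress tensor. -/
def dTheta (Δv : ℝ) (h : Idx3 → ℝ) : Matrix (Fin 3) (Fin 3) ℝ :=
  Matrix.of fun a b =>
    (dRho Δv h)⁻¹ *
      ∑' j : Idx3, h j * (gridV Δv j a - dU Δv h a) * (gridV Δv j b - dU Δv h b) * Δv ^ 3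

/-- The temperature tensor `(1−ν)T·Id + νΘ`. -/
def tensorOf (ν T : ℝ) (Θ : Matrix (Fin 3) (Fin 3) ℝ) : Matrix (Fin 3) (Fin 3) ℝ :=
  ((1 - ν) * T) • (1 : Matrix (Fin 3) (Fin 3) ℝ) + ν • Θ

/-- Continuous density. -/
def cRho (F : V3 → ℝ) : ℝ := ∫ v : V3, F v

/-- Continuous bulk velocity. -/
def cU (F : V3 → ℝ) : V3 := fun a => (cRho F)⁻¹ * ∫ v : V3, F v * v a

/-- Continuous temperature. -/
def cT (F : V3 → ℝ) : ℝ :=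
  (3 * cRho F)⁻¹ * ∫ v : V3, F v * enorm3 (fun a => v a - cU F a) ^ 2

/-- Continuous stress tensor. -/
def cTheta (F : V3 → ℝ) : Matrix (Fin 3) (Fin 3) ℝ :=
  Matrix.of fun a b => (cRho F)⁻¹ * ∫ v : V3, F v * (v a - cU F a) * (v b - cU F b)

/-- Collision frequency `A_ν = (1−ν)⁻¹`. -/
def Anu (ν : ℝ) : ℝ := (1 - ν)⁻¹

/-- The modified relaxation parameter `nt = κν/(κ+Δt)`. -/
def nuTilde (κ ν Δt : ℝ) : ℝ := κ * ν / (κ + Δt)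

/-- `s(i,j)`: the unique integer with `sΔx ≤ iΔx − Δt v_{j,1} < (s+1)Δx`. -/
def sIdx (Δx Δt Δv : ℝ) (i : ℤ) (j : Idx3) : ℤ :=
  ⌊((i : ℝ) * Δx - Δt * ((j 0 : ℝ) * Δv)) / Δx⌋

/-- Linear reconstruction of a grid function at the foot of the characteristic. -/
def recon (Δx Δt Δv : ℝ) (g : ℤ → Idx3 → ℝ) (i : ℤ) (j : Idx3) : ℝ :=
  (((i : ℝ) * Δx - Δt * ((j 0 : ℝ) * Δv) - (sIdx Δx Δt Δv i j : ℝ) * Δx) / Δx) *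
      g (sIdx Δx Δt Δv i j + 1) j
    + ((((sIdx Δx Δt Δv i j : ℝ) + 1) * Δx - ((i : ℝ) * Δx - Δt * ((j 0 : ℝ) * Δv))) / Δx) *
      g (sIdx Δx Δt Δv i j) j

/-- Discrete ellipsoidal Gaussian built from a velocity grid function `h`. -/
def gaussD (nt Δv : ℝ) (h : Idx3 → ℝ) (j : Idx3) : ℝ :=
  gaussianM (dRho Δv h) (dU Δv h) (tensorOf nt (dT Δv h) (dTheta Δv h)) (gridV Δv j)

/-- The shifted initial datum `v ↦ f₀(x_i − Δt v₁, v)`. -/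
def shift0 (f₀ : ℝ → V3 → ℝ) (Δx Δt : ℝ) (i : ℤ) : V3 → ℝ :=
  fun v => f₀ ((i : ℝ) * Δx - Δt * v 0) v

/-- Step-0 ellipsoidal Gaussian, built from the continuous macroscopic fields of `f̃⁰`. -/
def gauss0 (f₀ : ℝ → V3 → ℝ) (κ ν Δx Δt Δv : ℝ) (i : ℤ) (j : Idx3) : ℝ :=
  gaussianM (cRho (shift0 f₀ Δx Δt i)) (cU (shift0 f₀ Δx Δt i))
    (tensorOf (nuTilde κ ν Δt) (cT (shift0 f₀ Δx Δt i)) (cTheta (shift0 f₀ Δx Δt i)))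
    (gridV Δv j)

/-- `f̃⁰_{i,j} = f₀(x_i − Δt v_{j,1}, v_j)`. -/
def tilde0 (f₀ : ℝ → V3 → ℝ) (Δx Δt Δv : ℝ) (i : ℤ) (j : Idx3) : ℝ :=
  f₀ ((i : ℝ) * Δx - Δt * ((j 0 : ℝ) * Δv)) (gridV Δv j)

/-- The semi-Lagrangian scheme iterates `fⁿ_{i,j}`. -/
def schemeF (f₀ : ℝ → V3 → ℝ) (κ ν Δx Δt Δv : ℝ) : ℕ → ℤ → Idx3 → ℝ
  | 0 => fun i j => f₀ ((i : ℝ) * Δx) (gridV Δv j)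
  | 1 => fun i j =>
      (κ / (κ + Anu ν * Δt)) * tilde0 f₀ Δx Δt Δv i j
        + (Anu ν * Δt / (κ + Anu ν * Δt)) * gauss0 f₀ κ ν Δx Δt Δv i j
  | (n + 2) => fun i j =>
      (κ / (κ + Anu ν * Δt)) * recon Δx Δt Δv (schemeF f₀ κ ν Δx Δt Δv (n + 1)) i j
        + (Anu ν * Δt / (κ + Anu ν * Δt)) *
            gaussD (nuTilde κ ν Δt) Δv (recon Δx Δt Δv (schemeF f₀ κ ν Δx Δt Δv (n + 1)) i) j

/-- The reconstructed scheme iterates `f̃ⁿ_{i,j}`. -/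
def schemeTilde (f₀ : ℝ → V3 → ℝ) (κ ν Δx Δt Δv : ℝ) : ℕ → ℤ → Idx3 → ℝ
  | 0 => tilde0 f₀ Δx Δt Δv
  | (n + 1) => recon Δx Δt Δv (schemeF f₀ κ ν Δx Δt Δv (n + 1))

/-- The ellipsoidal Gaussian used in the `n → n+1` update of the scheme. -/
def schemeGauss (f₀ : ℝ → V3 → ℝ) (κ ν Δx Δt Δv : ℝ) : ℕ → ℤ → Idx3 → ℝ
  | 0 => gauss0 f₀ κ ν Δx Δt Δv
  | (n + 1) => fun i j =>
      gaussD (nuTilde κ ν Δt) Δv (schemeTilde f₀ κ ν Δx Δt Δv (n + 1) i) j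

/-- Discrete density of `f̃ⁿ` at spatial node `i` (continuous fields at step 0). -/
def schemeRho (f₀ : ℝ → V3 → ℝ) (κ ν Δx Δt Δv : ℝ) : ℕ → ℤ → ℝ
  | 0 => fun i => cRho (shift0 f₀ Δx Δt i)
  | (n + 1) => fun i => dRho Δv (schemeTilde f₀ κ ν Δx Δt Δv (n + 1) i)

/-- Discrete bulk velocity of `f̃ⁿ` at spatial node `i` (continuous fields at step 0). -/
def schemeU (f₀ : ℝ → V3 → ℝ) (κ ν Δx Δt Δv : ℝ) : ℕ → ℤ → V3
  | 0 => fun i => cU (shift0 f₀ Δx Δt i)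
  | (n + 1) => fun i => dU Δv (schemeTilde f₀ κ ν Δx Δt Δv (n + 1) i)

/-- Discrete temperature of `f̃ⁿ` at spatial node `i` (continuous fields at step 0). -/
def schemeTemp (f₀ : ℝ → V3 → ℝ) (κ ν Δx Δt Δv : ℝ) : ℕ → ℤ → ℝ
  | 0 => fun i => cT (shift0 f₀ Δx Δt i)
  | (n + 1) => fun i => dT Δv (schemeTilde f₀ κ ν Δx Δt Δv (n + 1) i)

/-- Weighted `L∞_q` norm of the initial datum. -/
def normLq (q : ℝ) (f₀ : ℝ → V3 → ℝ) : ℝ :=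
  ⨆ x : ℝ, ⨆ v : V3, |f₀ x v| * (1 + enorm3 v) ^ q

private lemma aux_abs_mul_le_half (x y : ℝ) : |x * y| ≤ (x ^ 2 + y ^ 2) / 2 := by
  rcases abs_cases (x * y) with ⟨h, _⟩ | ⟨h, _⟩ <;>
    nlinarith [sq_nonneg (x - y), sq_nonneg (x + y)]

/-- equivalence of the discrete temperature tensor with the discrete temperature,
as quadratic forms. -/
theorem discrete_temperature_tensor_equivalence
    (nt Δv : ℝ) (hnt : nt ∈ Set.Ioo (-(1 / 2) : ℝ) 1) (hΔv : 0 < Δv)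
    (f : Idx3 → ℝ) (hf : ∀ j, 0 ≤ f j)
    (hsum0 : Summable fun j : Idx3 => f j * Δv ^ 3)
    (hsum2 : Summable fun j : Idx3 => f j * enorm3 (gridV Δv j) ^ 2 * Δv ^ 3)
    (hρ : 0 < dRho Δv f) :
    ∀ k : V3,
      min (1 - nt) (1 + 2 * nt) * dT Δv f * enorm3 k ^ 2
          ≤ quadForm (tensorOf nt (dT Δv f) (dTheta Δv f)) k ∧
        quadForm (tensorOf nt (dT Δv f) (dTheta Δv f)) k
          ≤ max (1 - nt) (1 + 2 * nt) * dT Δv f * enorm3 k ^ 2 := by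
  intro k
  obtain ⟨hnt1, hnt2⟩ := hnt
  set c : Idx3 → V3 := fun j a => gridV Δv j a - dU Δv f a with hc
  have hΔ3 : (0:ℝ) < Δv ^ 3 := by positivity
  have hg0 : ∀ j, 0 ≤ f j * Δv ^ 3 := fun j => mul_nonneg (hf j) hΔ3.le
  have hsqv : ∀ v : V3, enorm3 v ^ 2 = ∑ a, v a ^ 2 := fun v =>
    Real.sq_sqrt (Finset.sum_nonneg fun _ _ => sq_nonneg _)
  -- summability facts
  have hgv2 : Summable fun j => (f j * Δv ^ 3) * ∑ a, gridV Δv j a ^ 2 :=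
    hsum2.congr fun j => by rw [hsqv]; ring
  have hgva : ∀ a, Summable fun j => (f j * Δv ^ 3) * gridV Δv j a := by
    intro a
    apply Summable.of_abs
    apply Summable.of_nonneg_of_le (fun j => abs_nonneg _) (fun j => ?_)
      ((hsum0.add hgv2).div_const 2)
    rw [abs_mul, abs_of_nonneg (hg0 j)]
    have h1 : |gridV Δv j a| ≤ (1 + gridV Δv j a ^ 2) / 2 := by
      rcases abs_cases (gridV Δv j a) with ⟨h, _⟩ | ⟨h, _⟩ <;>
        nlinarith [sq_nonneg (gridV Δv j a - 1), sq_nonneg (gridV Δv j a + 1)]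
    have h2 : gridV Δv j a ^ 2 ≤ ∑ b, gridV Δv j b ^ 2 :=
      Finset.single_le_sum (f := fun b => gridV Δv j b ^ 2) (fun b _ => sq_nonneg _)
        (Finset.mem_univ a)
    calc (f j * Δv ^ 3) * |gridV Δv j a|
        ≤ (f j * Δv ^ 3) * ((1 + ∑ b, gridV Δv j b ^ 2) / 2) := by
          apply mul_le_mul_of_nonneg_left _ (hg0 j); linarith
      _ = (f j * Δv ^ 3 + (f j * Δv ^ 3) * ∑ b, gridV Δv j b ^ 2) / 2 := by ring
  have hgc2 : Summable fun j => (f j * Δv ^ 3) * ∑ a, c j a ^ 2 := by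
    have hs : Summable fun j => (f j * Δv ^ 3) * ∑ a, gridV Δv j a ^ 2
        - (∑ a, (2 * dU Δv f a) * ((f j * Δv ^ 3) * gridV Δv j a))
        + (∑ a, dU Δv f a ^ 2) * (f j * Δv ^ 3) :=
      (hgv2.sub (summable_sum fun a _ => (hgva a).mul_left (2 * dU Δv f a))).add
        (hsum0.mul_left _)
    apply hs.congr
    intro j
    simp only [hc, Fin.sum_univ_three]
    ring
  have hcsq_le : ∀ j (a : Fin 3), c j a ^ 2 ≤ ∑ x, c j x ^ 2 := fun j a =>
    Finset.single_le_sum (f := fun x => c j x ^ 2) (fun x _ => sq_nonneg _) (Finset.mem_univ a)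
  have hCS : ∀ j, (∑ a, c j a * k a) ^ 2 ≤ (∑ a, c j a ^ 2) * ∑ a, k a ^ 2 := fun j =>
    Finset.sum_mul_sq_le_sq_mul_sq Finset.univ (c j) k
  have hkey : Summable fun j => (f j * Δv ^ 3) * (∑ a, c j a * k a) ^ 2 := by
    have hb : Summable fun j => (f j * Δv ^ 3) * ((∑ a, c j a ^ 2) * ∑ a, k a ^ 2) :=
      (hgc2.mul_right (∑ a, k a ^ 2)).congr fun j => by ring
    exact Summable.of_nonneg_of_le (fun j => mul_nonneg (hg0 j) (sq_nonneg _))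
      (fun j => mul_le_mul_of_nonneg_left (hCS j) (hg0 j)) hb
  have hFab : ∀ a b : Fin 3, Summable fun j =>
      (dRho Δv f)⁻¹ * (k a * (f j * c j a * c j b * Δv ^ 3) * k b) := by
    intro a b
    apply Summable.of_abs
    apply Summable.of_nonneg_of_le (fun j => abs_nonneg _) (fun j => ?_)
      (hgc2.mul_left ((dRho Δv f)⁻¹ * (|k a| * |k b|)))
    have h1 : |c j a| * |c j b| ≤ ∑ x, c j x ^ 2 := by
      rw [← abs_mul]
      refine (aux_abs_mul_le_half _ _).trans ?_
      have h2 := add_le_add (hcsq_le j a) (hcsq_le j b)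
      clear_value c
      linarith
    have habs : |(dRho Δv f)⁻¹ * (k a * (f j * c j a * c j b * Δv ^ 3) * k b)|
        = ((dRho Δv f)⁻¹ * (|k a| * |k b|)) * ((f j * Δv ^ 3) * (|c j a| * |c j b|)) := by
      simp only [abs_mul, abs_of_nonneg (inv_nonneg.2 hρ.le), abs_of_nonneg (hf j),
        abs_of_nonneg hΔ3.le]
      ring
    rw [habs]
    have hnn : 0 ≤ (dRho Δv f)⁻¹ * (|k a| * |k b|) :=
      mul_nonneg (inv_nonneg.2 hρ.le) (mul_nonneg (abs_nonneg _) (abs_nonneg _))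
    exact mul_le_mul_of_nonneg_left
      (mul_le_mul_of_nonneg_left h1 (hg0 j)) hnn
  -- quadratic form of Θ
  have hQtheta : quadForm (dTheta Δv f) k
      = (dRho Δv f)⁻¹ * ∑' j, (f j * Δv ^ 3) * (∑ a, c j a * k a) ^ 2 := by
    have h1 : ∀ a b : Fin 3, k a * dTheta Δv f a b * k b
        = ∑' j, (dRho Δv f)⁻¹ * (k a * (f j * c j a * c j b * Δv ^ 3) * k b) := by
      intro a b
      simp only [dTheta, Matrix.of_apply, hc, tsum_mul_left, tsum_mul_right]
      ring
    calc quadForm (dTheta Δv f) k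
        = ∑ a, ∑ b, ∑' j, (dRho Δv f)⁻¹ * (k a * (f j * c j a * c j b * Δv ^ 3) * k b) :=
          Finset.sum_congr rfl fun a _ => Finset.sum_congr rfl fun b _ => h1 a b
      _ = ∑ a, ∑' j, ∑ b, (dRho Δv f)⁻¹ * (k a * (f j * c j a * c j b * Δv ^ 3) * k b) :=
          Finset.sum_congr rfl fun a _ => (Summable.tsum_finsetSum fun b _ => hFab a b).symm
      _ = ∑' j, ∑ a, ∑ b, (dRho Δv f)⁻¹ * (k a * (f j * c j a * c j b * Δv ^ 3) * k b) :=
          (Summable.tsum_finsetSum fun a _ => summable_sum fun b _ => hFab a b).symm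
      _ = ∑' j, (dRho Δv f)⁻¹ * ((f j * Δv ^ 3) * (∑ a, c j a * k a) ^ 2) :=
          tsum_congr fun j => by simp only [Fin.sum_univ_three]; ring
      _ = _ := tsum_mul_left
  -- temperature identity
  have hT3 : ∑' j, (f j * Δv ^ 3) * ∑ a, c j a ^ 2 = 3 * dRho Δv f * dT Δv f := by
    rw [dT]
    have hS : (∑' j, f j * enorm3 (fun a => gridV Δv j a - dU Δv f a) ^ 2 * Δv ^ 3)
        = ∑' j, (f j * Δv ^ 3) * ∑ a, c j a ^ 2 :=
      tsum_congr fun j => by rw [hsqv]; simp only [hc]; ring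
    rw [hS]
    field_simp
    exact tsum_congr fun j => by ring
  have hTnn : 0 ≤ dT Δv f := by
    rw [dT]
    exact mul_nonneg (inv_nonneg.2 (by positivity))
      (tsum_nonneg fun j => mul_nonneg (mul_nonneg (hf j) (sq_nonneg _)) hΔ3.le)
  have hQ0 : 0 ≤ quadForm (dTheta Δv f) k := by
    rw [hQtheta]
    exact mul_nonneg (inv_nonneg.2 hρ.le)
      (tsum_nonneg fun j => mul_nonneg (hg0 j) (sq_nonneg _))
  have hQle : quadForm (dTheta Δv f) k ≤ 3 * dT Δv f * ∑ a, k a ^ 2 := by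
    rw [hQtheta]
    have h2 : (∑' j, (f j * Δv ^ 3) * (∑ a, c j a * k a) ^ 2)
        ≤ ∑' j, ((f j * Δv ^ 3) * ∑ a, c j a ^ 2) * ∑ a, k a ^ 2 := by
      refine Summable.tsum_le_tsum (fun j => ?_) hkey (hgc2.mul_right _)
      exact (mul_le_mul_of_nonneg_left (hCS j) (hg0 j)).trans_eq (by ring)
    calc (dRho Δv f)⁻¹ * ∑' j, (f j * Δv ^ 3) * (∑ a, c j a * k a) ^ 2
        ≤ (dRho Δv f)⁻¹ * ∑' j, ((f j * Δv ^ 3) * ∑ a, c j a ^ 2) * ∑ a, k a ^ 2 :=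
          mul_le_mul_of_nonneg_left h2 (inv_nonneg.2 hρ.le)
      _ = (dRho Δv f)⁻¹ * ((3 * dRho Δv f * dT Δv f) * ∑ a, k a ^ 2) := by
          rw [tsum_mul_right, hT3]
      _ = 3 * dT Δv f * ∑ a, k a ^ 2 := by field_simp
  have hTensor : quadForm (tensorOf nt (dT Δv f) (dTheta Δv f)) k
      = (1 - nt) * dT Δv f * (∑ a, k a ^ 2) + nt * quadForm (dTheta Δv f) k := by
    simp [quadForm, tensorOf, Matrix.one_apply, Fin.sum_univ_three]
    ring
  have hEnn : 0 ≤ ∑ a, k a ^ 2 := Finset.sum_nonneg fun _ _ => sq_nonneg _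
  have hTE : 0 ≤ dT Δv f * ∑ a, k a ^ 2 := mul_nonneg hTnn hEnn
  rw [hsqv k, hTensor]
  constructor
  · rcases le_total 0 nt with h | h
    · rw [min_eq_left (by linarith)]
      nlinarith [mul_nonneg h hQ0]
    · rw [min_eq_right (by linarith)]
      nlinarith [mul_nonneg (neg_nonneg.2 h) (sub_nonneg.2 hQle)]
  · rcases le_total 0 nt with h | h
    · rw [max_eq_right (by linarith)]
      nlinarith [mul_nonneg h (sub_nonneg.2 hQle)]
    · rw [max_eq_left (by linarith)]
      nlinarith [mul_nonneg (neg_nonneg.2 h) hQ0]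

end
end

section
/- Let ν̃ ∈ (−1/2, 1) and Δv > 0. Let f : ℤ³ → [0,∞) be such that ρ := Σ_{j∈ℤ³} f_j Δv³ satisfies 0 < ρ < ∞ and Σ_j f_j |v_j|² Δv³ < ∞, where v_j = jΔv ∈ ℝ³. Define U = (1/ρ)Σ_j f_j v_j Δv³, T = (1/(3ρ))Σ_j f_j |v_j − U|² Δv³, Θ = (1/ρ)Σ_j f_j (v_j − U)⊗(v_j − U) Δv³, and 𝒯_{ν̃} = (1−ν̃)T·Id + ν̃Θ. Then min{1−ν̃, 1+2ν̃}³·T³ ≤ det 𝒯_{ν̃} ≤ max{1−ν̃, 1+2ν̃}³·T³. -/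
noncomputable section

open Real MeasureTheory

open Matrix in
lemma det_bounds_of_quadform {M : Matrix (Fin 3) (Fin 3) ℝ} (hM : M.IsHermitian) {m m' : ℝ}
    (hm : 0 ≤ m)
    (hlow : ∀ x : Fin 3 → ℝ, m * (x ⬝ᵥ x) ≤ x ⬝ᵥ M *ᵥ x)
    (hhigh : ∀ x : Fin 3 → ℝ, x ⬝ᵥ M *ᵥ x ≤ m' * (x ⬝ᵥ x)) :
    m ^ 3 ≤ M.det ∧ M.det ≤ m' ^ 3 := by
  have hdet : M.det = ∏ i, hM.eigenvalues i := by
    have := hM.det_eq_prod_eigenvalues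
    simpa using this
  have key : ∀ i, m ≤ hM.eigenvalues i ∧ hM.eigenvalues i ≤ m' := by
    intro i
    set v : Fin 3 → ℝ := ⇑(hM.eigenvectorBasis i) with hv
    have hnorm : ‖hM.eigenvectorBasis i‖ = 1 := hM.eigenvectorBasis.orthonormal.1 i
    have hvv : v ⬝ᵥ v = 1 := by
      have h1 : (v ⬝ᵥ v) = ∑ a, v a * v a := rfl
      have h2 : ‖hM.eigenvectorBasis i‖ ^ 2 = ∑ a, v a * v a := by
        rw [EuclideanSpace.norm_eq]
        rw [Real.sq_sqrt (by positivity)]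
        simp [hv, sq]
      rw [h1, ← h2, hnorm]; norm_num
    have heig : hM.eigenvalues i = v ⬝ᵥ M *ᵥ v := by
      have := hM.eigenvalues_eq i
      simpa [dotProduct, hv] using this
    constructor
    · have := hlow v; rw [hvv, mul_one] at this; linarith [heig ▸ this]
    · have := hhigh v; rw [hvv, mul_one] at this; linarith [heig ▸ this]
  constructor
  · rw [hdet]
    calc m ^ 3 = ∏ _i : Fin 3, m := by norm_num [Finset.prod_const]
    _ ≤ ∏ i, hM.eigenvalues i :=
        Finset.prod_le_prod (fun i _ => hm) (fun i _ => (key i).1)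
  · rw [hdet]
    calc (∏ i, hM.eigenvalues i) ≤ ∏ _i : Fin 3, m' :=
        Finset.prod_le_prod (fun i _ => le_trans hm (key i).1) (fun i _ => (key i).2)
    _ = m' ^ 3 := by norm_num [Finset.prod_const]

set_option maxHeartbeats 1000000 in
open Matrix in
lemma aux_main_det_equiv
    (nt Δv : ℝ) (hnt : nt ∈ Set.Ioo (-(1 / 2) : ℝ) 1) (hΔv : 0 < Δv)
    (f : Idx3 → ℝ) (hf : ∀ j, 0 ≤ f j)
    (hsum0 : Summable fun j : Idx3 => f j * Δv ^ 3)
    (hsum2 : Summable fun j : Idx3 => f j * enorm3 (gridV Δv j) ^ 2 * Δv ^ 3)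
    (hρ : 0 < dRho Δv f) :
    min (1 - nt) (1 + 2 * nt) ^ 3 * dT Δv f ^ 3
        ≤ (tensorOf nt (dT Δv f) (dTheta Δv f)).det ∧
      (tensorOf nt (dT Δv f) (dTheta Δv f)).det
        ≤ max (1 - nt) (1 + 2 * nt) ^ 3 * dT Δv f ^ 3 := by
  obtain ⟨hnt1, hnt2⟩ := hnt
  have hΔ3 : (0:ℝ) < Δv ^ 3 := by positivity
  set w : Idx3 → V3 := fun j a => gridV Δv j a - dU Δv f a with hw
  have hE : ∀ g : V3, enorm3 g ^ 2 = ∑ a, g a ^ 2 := fun g => by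
    rw [enorm3, Real.sq_sqrt (by positivity)]
  have hsum2' : Summable (fun j : Idx3 => f j * (∑ b, gridV Δv j b ^ 2) * Δv ^ 3) := by
    refine hsum2.congr fun j => ?_
    rw [hE]
  -- summability of first moments
  have hsum1 : ∀ a : Fin 3, Summable (fun j : Idx3 => f j * gridV Δv j a * Δv ^ 3) := by
    intro a
    apply Summable.of_abs
    refine Summable.of_nonneg_of_le (fun j => abs_nonneg _) ?_ (hsum0.add hsum2')
    intro j
    have h1 : |f j * gridV Δv j a * Δv ^ 3| = f j * |gridV Δv j a| * Δv ^ 3 := by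
      rw [abs_mul, abs_mul, abs_of_nonneg (hf j), abs_of_nonneg hΔ3.le]
    have h2 : gridV Δv j a ^ 2 ≤ ∑ b, gridV Δv j b ^ 2 :=
      Finset.single_le_sum (f := fun b => gridV Δv j b ^ 2) (fun b _ => sq_nonneg _)
        (Finset.mem_univ a)
    have h3 : |gridV Δv j a| ≤ 1 + ∑ b, gridV Δv j b ^ 2 := by
      nlinarith [abs_nonneg (gridV Δv j a), sq_abs (gridV Δv j a)]
    rw [h1]
    calc f j * |gridV Δv j a| * Δv ^ 3
        ≤ f j * (1 + ∑ b, gridV Δv j b ^ 2) * Δv ^ 3 := by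
          exact mul_le_mul_of_nonneg_right (mul_le_mul_of_nonneg_left h3 (hf j)) hΔ3.le
      _ = f j * Δv ^ 3 + f j * (∑ b, gridV Δv j b ^ 2) * Δv ^ 3 := by ring
  -- summability of central second moments
  have hsumW : Summable (fun j : Idx3 => f j * (∑ a, w j a ^ 2) * Δv ^ 3) := by
    have hcomb : Summable (fun j : Idx3 =>
        f j * (∑ b, gridV Δv j b ^ 2) * Δv ^ 3
          + ((∑ a, (-2 * dU Δv f a) * (f j * gridV Δv j a * Δv ^ 3))
            + (∑ a, dU Δv f a ^ 2) * (f j * Δv ^ 3))) := by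
      refine hsum2'.add (Summable.add ?_ (hsum0.mul_left _))
      exact summable_sum fun a _ => (hsum1 a).mul_left _
    refine hcomb.congr fun j => ?_
    simp only [hw, Fin.sum_univ_three]
    ring
  have hWnn : ∀ j : Idx3, 0 ≤ f j * (∑ a, w j a ^ 2) * Δv ^ 3 := fun j => by
    have h0 : (0:ℝ) ≤ ∑ a, w j a ^ 2 := Finset.sum_nonneg fun a _ => sq_nonneg _
    exact mul_nonneg (mul_nonneg (hf j) h0) hΔ3.le
  -- summability of mixed central moments
  have hab : ∀ a b : Fin 3, Summable (fun j : Idx3 => f j * w j a * w j b * Δv ^ 3) := by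
    intro a b
    apply Summable.of_abs
    refine Summable.of_nonneg_of_le (fun j => abs_nonneg _) ?_ hsumW
    intro j
    have h1 : w j a ^ 2 ≤ ∑ c, w j c ^ 2 :=
      Finset.single_le_sum (f := fun c => w j c ^ 2) (fun c _ => sq_nonneg _) (Finset.mem_univ a)
    have h2 : w j b ^ 2 ≤ ∑ c, w j c ^ 2 :=
      Finset.single_le_sum (f := fun c => w j c ^ 2) (fun c _ => sq_nonneg _) (Finset.mem_univ b)
    have h3 : |w j a * w j b| ≤ ∑ c, w j c ^ 2 := by
      rw [abs_mul]
      nlinarith [sq_nonneg (|w j a| - |w j b|), sq_abs (w j a), sq_abs (w j b)]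
    calc |f j * w j a * w j b * Δv ^ 3| = f j * |w j a * w j b| * Δv ^ 3 := by
          rw [abs_mul, abs_mul, abs_mul, abs_of_nonneg (hf j), abs_of_nonneg hΔ3.le, abs_mul]
          ring
      _ ≤ f j * (∑ c, w j c ^ 2) * Δv ^ 3 :=
          mul_le_mul_of_nonneg_right (mul_le_mul_of_nonneg_left h3 (hf j)) hΔ3.le
  have hρne : dRho Δv f ≠ 0 := ne_of_gt hρ
  -- temperature formula
  have hTform : dT Δv f = (3 * dRho Δv f)⁻¹ * ∑' j, f j * (∑ a, w j a ^ 2) * Δv ^ 3 := by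
    rw [dT]
    congr 1
    refine tsum_congr fun j => ?_
    rw [hE]
  have hTnn : 0 ≤ dT Δv f := by
    rw [hTform]
    have h1 : (0:ℝ) ≤ (3 * dRho Δv f)⁻¹ := by positivity
    exact mul_nonneg h1 (tsum_nonneg hWnn)
  have h3T : ∑' j, f j * (∑ a, w j a ^ 2) * Δv ^ 3 = 3 * dRho Δv f * dT Δv f := by
    rw [hTform]
    rw [← mul_assoc, mul_inv_cancel₀ (mul_ne_zero three_ne_zero hρne), one_mul]
  -- quadratic form of dTheta
  have hQrep : ∀ x : V3, x ⬝ᵥ (dTheta Δv f) *ᵥ x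
      = (dRho Δv f)⁻¹ * ∑' j, f j * (∑ a, w j a * x a) ^ 2 * Δv ^ 3 := by
    intro x
    have hswap : ∑' j, f j * (∑ a, w j a * x a) ^ 2 * Δv ^ 3
        = ∑ a, ∑ b, (x a * x b) * ∑' j, f j * w j a * w j b * Δv ^ 3 := by
      have step1 : ∀ a b : Fin 3, (x a * x b) * ∑' j, f j * w j a * w j b * Δv ^ 3
          = ∑' j, (x a * x b) * (f j * w j a * w j b * Δv ^ 3) :=
        fun a b => (tsum_mul_left).symm
      calc ∑' j, f j * (∑ a, w j a * x a) ^ 2 * Δv ^ 3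
          = ∑' j, ∑ a, ∑ b, (x a * x b) * (f j * w j a * w j b * Δv ^ 3) := by
            refine tsum_congr fun j => ?_
            simp only [Fin.sum_univ_three]
            ring
        _ = ∑ a, ∑' j, ∑ b, (x a * x b) * (f j * w j a * w j b * Δv ^ 3) := by
            refine Summable.tsum_finsetSum fun a _ => summable_sum fun b _ => ?_
            exact (hab a b).mul_left _
        _ = ∑ a, ∑ b, ∑' j, (x a * x b) * (f j * w j a * w j b * Δv ^ 3) := by
            refine Finset.sum_congr rfl fun a _ => ?_
            exact Summable.tsum_finsetSum fun b _ => (hab a b).mul_left _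
        _ = ∑ a, ∑ b, (x a * x b) * ∑' j, f j * w j a * w j b * Δv ^ 3 := by
            exact Finset.sum_congr rfl fun a _ => Finset.sum_congr rfl fun b _ =>
              (step1 a b).symm
    rw [hswap]
    simp only [dotProduct, Matrix.mulVec, dTheta, Matrix.of_apply, Finset.mul_sum,
      Finset.sum_mul]
    refine Finset.sum_congr rfl fun a _ => Finset.sum_congr rfl fun b _ => ?_
    have : (fun j : Idx3 => f j * w j a * w j b * Δv ^ 3)
        = fun j : Idx3 => f j * (gridV Δv j a - dU Δv f a) * (gridV Δv j b - dU Δv f b) * Δv ^ 3 := by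
      funext j; simp [hw]
    rw [this]
    ring
  -- bounds on the quadratic form of dTheta
  have hxsq : ∀ x : V3, x ⬝ᵥ x = ∑ a, x a ^ 2 := by
    intro x
    simp [dotProduct, sq]
  have hQ0 : ∀ x : V3, 0 ≤ x ⬝ᵥ (dTheta Δv f) *ᵥ x := by
    intro x
    rw [hQrep]
    have h1 : (0:ℝ) ≤ (dRho Δv f)⁻¹ := by positivity
    refine mul_nonneg h1 (tsum_nonneg fun j => ?_)
    exact mul_nonneg (mul_nonneg (hf j) (sq_nonneg _)) hΔ3.le
  have hQle : ∀ x : V3, x ⬝ᵥ (dTheta Δv f) *ᵥ x ≤ 3 * dT Δv f * (x ⬝ᵥ x) := by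
    intro x
    rw [hQrep, hxsq]
    have hbnd : ∀ j : Idx3, f j * (∑ a, w j a * x a) ^ 2 * Δv ^ 3
        ≤ (f j * (∑ a, w j a ^ 2) * Δv ^ 3) * (∑ a, x a ^ 2) := by
      intro j
      have hcs : (∑ a, w j a * x a) ^ 2 ≤ (∑ a, w j a ^ 2) * ∑ a, x a ^ 2 :=
        Finset.sum_mul_sq_le_sq_mul_sq Finset.univ (w j) x
      calc f j * (∑ a, w j a * x a) ^ 2 * Δv ^ 3
          ≤ f j * ((∑ a, w j a ^ 2) * ∑ a, x a ^ 2) * Δv ^ 3 :=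
            mul_le_mul_of_nonneg_right (mul_le_mul_of_nonneg_left hcs (hf j)) hΔ3.le
        _ = (f j * (∑ a, w j a ^ 2) * Δv ^ 3) * (∑ a, x a ^ 2) := by ring
    have hsumL : Summable (fun j : Idx3 => f j * (∑ a, w j a * x a) ^ 2 * Δv ^ 3) := by
      refine Summable.of_nonneg_of_le (fun j => ?_) hbnd (hsumW.mul_right _)
      exact mul_nonneg (mul_nonneg (hf j) (sq_nonneg _)) hΔ3.le
    have htle := Summable.tsum_le_tsum hbnd hsumL (hsumW.mul_right _)
    have h2 : ∑' j, (f j * (∑ a, w j a ^ 2) * Δv ^ 3) * (∑ a, x a ^ 2)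
        = 3 * dRho Δv f * dT Δv f * ∑ a, x a ^ 2 := by
      rw [tsum_mul_right, h3T]
    have htle' := htle.trans (le_of_eq h2)
    calc (dRho Δv f)⁻¹ * ∑' j, f j * (∑ a, w j a * x a) ^ 2 * Δv ^ 3
        ≤ (dRho Δv f)⁻¹ * (3 * dRho Δv f * dT Δv f * ∑ a, x a ^ 2) := by
          exact mul_le_mul_of_nonneg_left htle' (by positivity)
      _ = 3 * dT Δv f * ∑ a, x a ^ 2 := by field_simp
  -- Hermitian-ness
  have hΘsym : (dTheta Δv f).IsHermitian := by
    rw [Matrix.IsHermitian]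
    ext a b
    simp only [Matrix.conjTranspose_apply, dTheta, Matrix.of_apply, star_trivial]
    congr 1
    exact tsum_congr fun j => by ring
  have hMsym : (tensorOf nt (dT Δv f) (dTheta Δv f)).IsHermitian := by
    rw [Matrix.IsHermitian]
    ext a b
    simp only [tensorOf, Matrix.conjTranspose_apply, Matrix.add_apply, Matrix.smul_apply,
      Matrix.one_apply, star_trivial, smul_eq_mul]
    rw [← hΘsym.apply b a]
    simp only [Matrix.conjTranspose_apply, star_trivial]
    by_cases h : a = b <;> simp [h, eq_comm]
  -- quadratic form of the tensor
  have hMquad : ∀ x : V3, x ⬝ᵥ (tensorOf nt (dT Δv f) (dTheta Δv f)) *ᵥ x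
      = (1 - nt) * dT Δv f * (x ⬝ᵥ x) + nt * (x ⬝ᵥ (dTheta Δv f) *ᵥ x) := by
    intro x
    simp only [tensorOf, Matrix.add_mulVec, Matrix.smul_mulVec, Matrix.one_mulVec,
      dotProduct_add, dotProduct_smul, smul_eq_mul]
  have hxx : ∀ x : V3, 0 ≤ x ⬝ᵥ x := by
    intro x; rw [hxsq]; exact Finset.sum_nonneg fun a _ => sq_nonneg _
  -- apply the abstract eigenvalue bound
  have hmin : (0:ℝ) < min (1 - nt) (1 + 2 * nt) := lt_min (by linarith) (by linarith)
  have hm0 : 0 ≤ min (1 - nt) (1 + 2 * nt) * dT Δv f := mul_nonneg hmin.le hTnn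
  have hlow : ∀ x : V3, min (1 - nt) (1 + 2 * nt) * dT Δv f * (x ⬝ᵥ x)
      ≤ x ⬝ᵥ (tensorOf nt (dT Δv f) (dTheta Δv f)) *ᵥ x := by
    intro x
    rw [hMquad]
    rcases le_total 0 nt with h | h
    · rw [min_eq_left (by linarith)]
      nlinarith [mul_nonneg h (hQ0 x)]
    · rw [min_eq_right (by linarith)]
      have h1 : nt * (3 * dT Δv f * (x ⬝ᵥ x)) ≤ nt * (x ⬝ᵥ (dTheta Δv f) *ᵥ x) :=
        mul_le_mul_of_nonpos_left (hQle x) h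
      nlinarith
  have hhigh : ∀ x : V3, x ⬝ᵥ (tensorOf nt (dT Δv f) (dTheta Δv f)) *ᵥ x
      ≤ max (1 - nt) (1 + 2 * nt) * dT Δv f * (x ⬝ᵥ x) := by
    intro x
    rw [hMquad]
    rcases le_total 0 nt with h | h
    · rw [max_eq_right (by linarith)]
      have h1 : nt * (x ⬝ᵥ (dTheta Δv f) *ᵥ x) ≤ nt * (3 * dT Δv f * (x ⬝ᵥ x)) :=
        mul_le_mul_of_nonneg_left (hQle x) h
      nlinarith
    · rw [max_eq_left (by linarith)]
      nlinarith [mul_nonpos_of_nonpos_of_nonneg h (hQ0 x)]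
  obtain ⟨hL, hR⟩ := det_bounds_of_quadform hMsym hm0 hlow hhigh
  constructor
  · calc min (1 - nt) (1 + 2 * nt) ^ 3 * dT Δv f ^ 3
        = (min (1 - nt) (1 + 2 * nt) * dT Δv f) ^ 3 := by ring
      _ ≤ _ := hL
  · calc (tensorOf nt (dT Δv f) (dTheta Δv f)).det
        ≤ (max (1 - nt) (1 + 2 * nt) * dT Δv f) ^ 3 := hR
      _ = max (1 - nt) (1 + 2 * nt) ^ 3 * dT Δv f ^ 3 := by ring



/-- equivalence of the determinant of the discrete temperature tensor with the
cube of the discrete temperature. -/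
theorem discrete_temperature_tensor_det_equivalence
    (nt Δv : ℝ) (hnt : nt ∈ Set.Ioo (-(1 / 2) : ℝ) 1) (hΔv : 0 < Δv)
    (f : Idx3 → ℝ) (hf : ∀ j, 0 ≤ f j)
    (hsum0 : Summable fun j : Idx3 => f j * Δv ^ 3)
    (hsum2 : Summable fun j : Idx3 => f j * enorm3 (gridV Δv j) ^ 2 * Δv ^ 3)
    (hρ : 0 < dRho Δv f) :
    min (1 - nt) (1 + 2 * nt) ^ 3 * dT Δv f ^ 3
        ≤ (tensorOf nt (dT Δv f) (dTheta Δv f)).det ∧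
      (tensorOf nt (dT Δv f) (dTheta Δv f)).det
        ≤ max (1 - nt) (1 + 2 * nt) ^ 3 * dT Δv f ^ 3 := by
  exact aux_main_det_equiv nt Δv hnt hΔv f hf hsum0 hsum2 hρ

end
end

section
/- Let q > 5 and Δv > 0. There exists a constant C_M > 0, depending only on q, with the following property. Let f : ℤ³ → [0,∞) satisfy 0 < N := sup_{j∈ℤ³} f_j(1+|v_j|)^q < ∞, where v_j = jΔv ∈ ℝ³, and let ρ = Σ_j f_j Δv³ > 0, U = (1/ρ)Σ_j f_j v_j Δv³, T = (1/(3ρ))Σ_j f_j|v_j − U|² Δv³ > 0. If Δv ≤ (3ρT/(8πN))^{1/5}, then ρ ≤ C_M · T^{3/2} · N. -/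
noncomputable section

open Real MeasureTheory

lemma enorm3_nonneg (v : V3) : 0 ≤ enorm3 v := Real.sqrt_nonneg _

lemma abs_coord_le_enorm3 (v : V3) (a : Fin 3) : |v a| ≤ enorm3 v := by
  rw [← Real.sqrt_sq_eq_abs]
  exact Real.sqrt_le_sqrt (Finset.single_le_sum (fun b _ => sq_nonneg (v b)) (Finset.mem_univ a))

lemma near_count (Δv R : ℝ) (hΔv : 0 < Δv) (hR : 0 ≤ R) (U : V3) (g : Idx3 → ℝ)
    (hg : ∀ j, 0 ≤ g j) (hgs : Summable g) (M : ℝ) (hM : ∀ j, g j ≤ M)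
    (S : Set Idx3) (hS : ∀ j ∈ S, enorm3 (fun a => gridV Δv j a - U a) ≤ R) :
    ∑' j : S, g j ≤ ((2 * R + Δv) / Δv) ^ 3 * M := by
  classical
  set B : Finset Idx3 :=
    Fintype.piFinset (fun a => Finset.Icc ⌈(U a - R) / Δv⌉ ⌊(U a + R) / Δv⌋) with hB
  have hSB : S ⊆ ↑B := by
    intro j hj
    have hj' := hS j hj
    simp only [hB, Finset.mem_coe, Fintype.mem_piFinset, Finset.mem_Icc]
    intro a
    have habs : |(j a : ℝ) * Δv - U a| ≤ R := by
      have := abs_coord_le_enorm3 (fun a => gridV Δv j a - U a) a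
      simpa [gridV] using this.trans hj'
    rw [abs_le] at habs
    constructor
    · rw [Int.ceil_le, div_le_iff₀ hΔv]
      linarith [habs.1]
    · rw [Int.le_floor, le_div_iff₀ hΔv]
      linarith [habs.2]
  have hM0 : 0 ≤ M := le_trans (hg (fun _ => 0)) (hM (fun _ => 0))
  have h1 : ∑' j : S, g j ≤ ∑ j ∈ B, g j := by
    rw [tsum_subtype, sum_eq_tsum_indicator]
    exact Summable.tsum_le_tsum
      (fun j => Set.indicator_le_indicator_of_subset hSB (fun j => hg j) j)
      (hgs.indicator S) (hgs.indicator ↑B)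
  have hcardfac : ∀ a : Fin 3,
      (((Finset.Icc ⌈(U a - R) / Δv⌉ ⌊(U a + R) / Δv⌋).card : ℕ) : ℝ) ≤ (2 * R + Δv) / Δv := by
    intro a
    rw [Int.card_Icc]
    set m : ℤ := ⌊(U a + R) / Δv⌋ + 1 - ⌈(U a - R) / Δv⌉ with hm
    have hc : (0:ℝ) ≤ (2 * R + Δv) / Δv := by positivity
    have hm' : (m : ℝ) ≤ (2 * R + Δv) / Δv := by
      have h1 := Int.floor_le ((U a + R) / Δv)
      have h2 := Int.le_ceil ((U a - R) / Δv)
      have heq : (U a + R) / Δv + 1 - (U a - R) / Δv = (2 * R + Δv) / Δv := by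
        field_simp; ring
      push_cast [hm]
      linarith
    have : ((m.toNat : ℤ) : ℝ) ≤ (2 * R + Δv) / Δv := by
      rw [Int.toNat_eq_max]
      push_cast
      exact max_le hm' hc
    exact_mod_cast this
  have hcard : (B.card : ℝ) ≤ ((2 * R + Δv) / Δv) ^ 3 := by
    rw [hB, Fintype.card_piFinset]
    push_cast
    calc (∏ a : Fin 3, (((Finset.Icc ⌈(U a - R) / Δv⌉ ⌊(U a + R) / Δv⌋).card : ℕ) : ℝ))
        ≤ ∏ _a : Fin 3, (2 * R + Δv) / Δv :=
          Finset.prod_le_prod (fun a _ => by positivity) (fun a _ => hcardfac a)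
      _ = ((2 * R + Δv) / Δv) ^ 3 := by
          simp [Finset.prod_const, div_pow]
  calc ∑' j : S, g j ≤ ∑ j ∈ B, g j := h1
    _ ≤ ∑ _j ∈ B, M := Finset.sum_le_sum (fun j _ => hM j)
    _ = (B.card : ℝ) * M := by rw [Finset.sum_const, nsmul_eq_mul]
    _ ≤ ((2 * R + Δv) / Δv) ^ 3 * M := mul_le_mul_of_nonneg_right hcard hM0

/-- discrete moment estimate `ρ ≤ C_M T^{3/2} N`. -/
theorem discrete_moment_estimate_one (q : ℝ) (hq : 5 < q) :
    ∃ C > 0, ∀ (Δv : ℝ), 0 < Δv → ∀ f : Idx3 → ℝ, (∀ j, 0 ≤ f j) →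
      BddAbove (Set.range fun j : Idx3 => f j * (1 + enorm3 (gridV Δv j)) ^ q) →
      0 < (⨆ j : Idx3, f j * (1 + enorm3 (gridV Δv j)) ^ q) →
      0 < dRho Δv f → 0 < dT Δv f →
      Δv ≤ (3 * dRho Δv f * dT Δv f /
            (8 * π * ⨆ j : Idx3, f j * (1 + enorm3 (gridV Δv j)) ^ q)) ^ ((1 : ℝ) / 5) →
      dRho Δv f ≤ C * dT Δv f ^ ((3 : ℝ) / 2) *
        ⨆ j : Idx3, f j * (1 + enorm3 (gridV Δv j)) ^ q := by
  refine ⟨2000, by norm_num, ?_⟩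
  intro Δv hΔv f hf hbdd hN hρ hT hΔ
  set N := ⨆ j : Idx3, f j * (1 + enorm3 (gridV Δv j)) ^ q with hNdef
  -- pointwise bound f j ≤ N
  have hfN : ∀ j, f j ≤ N := by
    intro j
    have hw : (1:ℝ) ≤ (1 + enorm3 (gridV Δv j)) ^ q :=
      Real.one_le_rpow (by linarith [enorm3_nonneg (gridV Δv j)]) (by linarith)
    exact le_trans (le_mul_of_one_le_right (hf j) hw) (le_ciSup hbdd j)
  -- summability of the two moments
  have hsum1 : Summable (fun j : Idx3 => f j * Δv ^ 3) := by
    by_contra h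
    have : dRho Δv f = 0 := by
      simp only [dRho, tsum_eq_zero_of_not_summable h]
    exact absurd this (ne_of_gt hρ)
  have hsum2 : Summable (fun j : Idx3 =>
      f j * enorm3 (fun a => gridV Δv j a - dU Δv f a) ^ 2 * Δv ^ 3) := by
    by_contra h
    have : dT Δv f = 0 := by
      simp only [dT, tsum_eq_zero_of_not_summable h, mul_zero]
    exact absurd this (ne_of_gt hT)
  have h3ρT : (∑' j : Idx3, f j * enorm3 (fun a => gridV Δv j a - dU Δv f a) ^ 2 * Δv ^ 3)
      = 3 * dRho Δv f * dT Δv f := by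
    have h3ρ : (3 * dRho Δv f) ≠ 0 := by positivity
    simp only [dT]
    rw [← mul_assoc, mul_inv_cancel₀ h3ρ, one_mul]
  -- the splitting radius
  set R := Real.sqrt (6 * dT Δv f) with hRdef
  have hR0 : 0 < R := Real.sqrt_pos.mpr (by positivity)
  have hR2 : R ^ 2 = 6 * dT Δv f := Real.sq_sqrt (by positivity)
  set S : Set Idx3 := {j | enorm3 (fun a => gridV Δv j a - dU Δv f a) ≤ R} with hSdef
  have hsplit : (∑' j : S, (f ↑j * Δv ^ 3)) + (∑' j : ↥Sᶜ, (f ↑j * Δv ^ 3)) = dRho Δv f :=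
    Summable.tsum_add_tsum_compl (hsum1.subtype S) (hsum1.subtype Sᶜ)
  -- tail bound
  have htail : (∑' j : ↥Sᶜ, (f ↑j * Δv ^ 3)) ≤ dRho Δv f / 2 := by
    have h6T : (0:ℝ) < 6 * dT Δv f := by positivity
    have hle : ∀ j : ↥Sᶜ, f ↑j * Δv ^ 3 ≤ (6 * dT Δv f)⁻¹ *
        (f ↑j * enorm3 (fun a => gridV Δv (↑j) a - dU Δv f a) ^ 2 * Δv ^ 3) := by
      intro j
      have hjR : R < enorm3 (fun a => gridV Δv (↑j) a - dU Δv f a) := by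
        have := j.2
        simp only [hSdef, Set.mem_compl_iff, Set.mem_setOf_eq, not_le] at this
        exact this
      have h1 : 6 * dT Δv f ≤ enorm3 (fun a => gridV Δv (↑j) a - dU Δv f a) ^ 2 := by
        rw [← hR2]
        nlinarith [hR0, enorm3_nonneg (fun a => gridV Δv (↑j) a - dU Δv f a)]
      rw [le_inv_mul_iff₀ h6T]
      nlinarith [mul_le_mul_of_nonneg_left h1
        (mul_nonneg (hf ↑j) (pow_nonneg hΔv.le 3))]
    calc (∑' j : ↥Sᶜ, (f ↑j * Δv ^ 3))
        ≤ ∑' j : ↥Sᶜ, (6 * dT Δv f)⁻¹ *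
            (f ↑j * enorm3 (fun a => gridV Δv (↑j) a - dU Δv f a) ^ 2 * Δv ^ 3) :=
          Summable.tsum_le_tsum hle (hsum1.subtype Sᶜ) ((hsum2.mul_left _).subtype Sᶜ)
      _ = (6 * dT Δv f)⁻¹ * ∑' j : ↥Sᶜ,
            (f ↑j * enorm3 (fun a => gridV Δv (↑j) a - dU Δv f a) ^ 2 * Δv ^ 3) :=
          tsum_mul_left
      _ ≤ (6 * dT Δv f)⁻¹ * (3 * dRho Δv f * dT Δv f) := by
          apply mul_le_mul_of_nonneg_left _ (by positivity)
          rw [← h3ρT]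
          exact Summable.tsum_subtype_le _ _
            (fun j => mul_nonneg (mul_nonneg (hf j) (sq_nonneg _)) (by positivity)) hsum2
      _ = dRho Δv f / 2 := by
          field_simp
          ring
  -- near bound
  have hnear : (∑' j : S, (f ↑j * Δv ^ 3)) ≤ (2 * R + Δv) ^ 3 * N := by
    have := near_count Δv R hΔv hR0.le (dU Δv f) (fun j => f j * Δv ^ 3)
      (fun j => mul_nonneg (hf j) (by positivity)) hsum1 (N * Δv ^ 3)
      (fun j => mul_le_mul_of_nonneg_right (hfN j) (by positivity)) S (fun j hj => hj)
    calc (∑' j : S, (f ↑j * Δv ^ 3)) ≤ ((2 * R + Δv) / Δv) ^ 3 * (N * Δv ^ 3) := this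
      _ = (2 * R + Δv) ^ 3 * N := by
          field_simp
  have hkey : dRho Δv f ≤ 2 * ((2 * R + Δv) ^ 3 * N) := by linarith
  -- sqrt facts
  set s := Real.sqrt (dT Δv f) with hsdef
  have hs0 : 0 < s := Real.sqrt_pos.mpr hT
  have hs2 : s ^ 2 = dT Δv f := Real.sq_sqrt hT.le
  have hT32 : dT Δv f ^ ((3:ℝ)/2) = dT Δv f * s := by
    rw [show (3:ℝ)/2 = 1 + 1/2 by norm_num, Real.rpow_add hT, Real.rpow_one,
      hsdef, Real.sqrt_eq_rpow]
  have hs6 : Real.sqrt 6 ≤ 5/2 := by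
    nlinarith [Real.sq_sqrt (by norm_num : (0:ℝ) ≤ 6), Real.sqrt_nonneg 6]
  have hRs : R ≤ 5/2 * s := by
    rw [hRdef, hsdef, Real.sqrt_mul (by norm_num : (0:ℝ) ≤ 6)]
    exact mul_le_mul_of_nonneg_right hs6 (Real.sqrt_nonneg _)
  rw [hT32]
  rcases le_or_gt Δv R with hcase | hcase
  · -- Δv ≤ R : grid fine compared to thermal speed
    have h3 : 2 * R + Δv ≤ 15/2 * s := by linarith
    have h4 : (2 * R + Δv) ^ 3 ≤ (15/2 * s) ^ 3 :=
      pow_le_pow_left₀ (by positivity) h3 3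
    have h5 : (15/2 * s) ^ 3 = 3375/8 * (dT Δv f * s) := by
      rw [← hs2]; ring
    have h5N : (15/2 * s) ^ 3 * N = 3375/8 * (dT Δv f * s) * N := by
      rw [← hs2]; ring
    linarith [hkey, mul_le_mul_of_nonneg_right h4 hN.le, h5N,
      (mul_pos (mul_pos hT hs0) hN).le]
  · -- R < Δv : use the CFL-type hypothesis on Δv
    have hkey2 : dRho Δv f ≤ 54 * Δv ^ 3 * N := by
      have h3 : 2 * R + Δv ≤ 3 * Δv := by linarith
      have h4 : (2 * R + Δv) ^ 3 ≤ (3 * Δv) ^ 3 :=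
        pow_le_pow_left₀ (by positivity) h3 3
      have h5N : (3 * Δv) ^ 3 * N = 27 * Δv ^ 3 * N := by ring
      linarith [hkey, mul_le_mul_of_nonneg_right h4 hN.le, h5N]
    have hx : (0:ℝ) ≤ 3 * dRho Δv f * dT Δv f / (8 * π * N) := by positivity
    have h5 : Δv ^ 5 ≤ 3 * dRho Δv f * dT Δv f / (8 * π * N) := by
      calc Δv ^ 5 ≤ ((3 * dRho Δv f * dT Δv f / (8 * π * N)) ^ ((1:ℝ)/5)) ^ 5 :=
            pow_le_pow_left₀ hΔv.le hΔ 5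
        _ = 3 * dRho Δv f * dT Δv f / (8 * π * N) := by
            rw [show (1:ℝ)/5 = ((5:ℕ):ℝ)⁻¹ by norm_num]
            exact Real.rpow_inv_natCast_pow hx (by norm_num)
    have hA : Δv ^ 5 * (8 * π * N) ≤ 3 * dRho Δv f * dT Δv f := by
      rw [← le_div_iff₀ (by positivity)]
      exact h5
    have hB : 3 * dRho Δv f * dT Δv f ≤ 3 * (54 * Δv ^ 3 * N) * dT Δv f := by
      linarith [mul_le_mul_of_nonneg_right hkey2 hT.le]
    have hπ : (3:ℝ) < π := Real.pi_gt_three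
    have hΔ2 : Δv ^ 2 ≤ 27/4 * dT Δv f := by
      have hpos3 : (0:ℝ) < 24 * N * Δv ^ 3 := by positivity
      have hmul : (24 * N * Δv ^ 3) * Δv ^ 2 ≤ (24 * N * Δv ^ 3) * (27/4 * dT Δv f) := by
        linarith [hA, hB, mul_nonneg (mul_nonneg (by linarith : (0:ℝ) ≤ π - 3) hN.le)
          (pow_nonneg hΔv.le 5)]
      exact le_of_mul_le_mul_left hmul hpos3
    have hΔs : Δv ≤ 3 * s := by
      have h9 : Δv ^ 2 ≤ (3 * s) ^ 2 := by nlinarith [hs2, hT]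
      calc Δv = Real.sqrt (Δv ^ 2) := (Real.sqrt_sq hΔv.le).symm
        _ ≤ Real.sqrt ((3 * s) ^ 2) := Real.sqrt_le_sqrt h9
        _ = 3 * s := Real.sqrt_sq (by positivity)
    have hΔ3 : Δv ^ 3 ≤ 27 * (dT Δv f * s) := by
      have := pow_le_pow_left₀ hΔv.le hΔs 3
      calc Δv ^ 3 ≤ (3 * s) ^ 3 := this
        _ = 27 * (dT Δv f * s) := by rw [← hs2]; ring
    linarith [mul_le_mul_of_nonneg_right hΔ3 hN.le, hkey2,
      (mul_pos (mul_pos hT hs0) hN).le]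

end
end

section
/- Let n ≥ 1 and suppose that for every 0 ≤ m < n, all i ∈ ℤ and j ∈ ℤ³, the discrete ellipsoidal Gaussian satisfies M_{ν̃,j}(f̃^m_i) ≥ 0, and suppose that f̃⁰_{i,j} ≥ c₁e^{−c₂|v_j|^α} for all i,j, where c₁, c₂, α > 0. Then for all i ∈ ℤ, j ∈ ℤ³: f ⁿ_{i,j} ≥ c₁(κ/(κ+A_νΔt))ⁿ e^{−c₂|v_j|^α} and f̃ ⁿ_{i,j} ≥ c₁(κ/(κ+A_νΔt))ⁿ e^{−c₂|v_j|^α} ≥ c₁e^{−(A_ν/κ)nΔt}e^{−c₂|v_j|^α}. -/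
noncomputable section

open Real MeasureTheory

lemma recon_lower (Δx Δt Δv : ℝ) (hΔx : 0 < Δx) (g : ℤ → Idx3 → ℝ) (j : Idx3) (C : ℝ)
    (hg : ∀ i, C ≤ g i j) (i : ℤ) : C ≤ recon Δx Δt Δv g i j := by
  unfold recon sIdx
  set y := (i : ℝ) * Δx - Δt * ((j 0 : ℝ) * Δv) with hy
  set s : ℤ := ⌊y / Δx⌋ with hs
  have hf1 := Int.floor_le (y / Δx)
  have hf2 := (Int.lt_floor_add_one (y / Δx)).le
  have h1 : (s : ℝ) * Δx ≤ y := by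
    have : (s : ℝ) * Δx ≤ (y / Δx) * Δx := by nlinarith
    rwa [div_mul_cancel₀ _ hΔx.ne'] at this
  have h2 : y ≤ ((s : ℝ) + 1) * Δx := by
    have : (y / Δx) * Δx ≤ ((s : ℝ) + 1) * Δx := by nlinarith
    rwa [div_mul_cancel₀ _ hΔx.ne'] at this
  have ha : 0 ≤ (y - (s : ℝ) * Δx) / Δx := div_nonneg (by linarith) hΔx.le
  have hb : 0 ≤ (((s : ℝ) + 1) * Δx - y) / Δx := div_nonneg (by linarith) hΔx.le
  have hsum : (y - (s : ℝ) * Δx) / Δx + (((s : ℝ) + 1) * Δx - y) / Δx = 1 := by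
    field_simp
    ring
  calc C = ((y - (s : ℝ) * Δx) / Δx) * C + ((((s : ℝ) + 1) * Δx - y) / Δx) * C := by
        rw [← add_mul, hsum, one_mul]
    _ ≤ _ := add_le_add (mul_le_mul_of_nonneg_left (hg _) ha)
          (mul_le_mul_of_nonneg_left (hg _) hb)

/-- propagation of the Gaussian-type lower bound along the scheme iterates. -/
theorem scheme_lower_bound_propagation
    (κ ν Δx Δt Δv c₁ c₂ α : ℝ) (hκ : 0 < κ) (hν : ν ∈ Set.Ioo (-(1 / 2) : ℝ) 1)
    (hΔx : 0 < Δx) (hΔt : 0 < Δt) (hΔv : 0 < Δv)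
    (hc₁ : 0 < c₁) (hc₂ : 0 < c₂) (hα : 0 < α)
    (f₀ : ℝ → V3 → ℝ) (n : ℕ) (hn : 1 ≤ n)
    (hGauss : ∀ m < n, ∀ (i : ℤ) (j : Idx3), 0 ≤ schemeGauss f₀ κ ν Δx Δt Δv m i j)
    (h0 : ∀ (i : ℤ) (j : Idx3),
      c₁ * Real.exp (-c₂ * enorm3 (gridV Δv j) ^ α) ≤ schemeTilde f₀ κ ν Δx Δt Δv 0 i j) :
    ∀ (i : ℤ) (j : Idx3),
      c₁ * (κ / (κ + Anu ν * Δt)) ^ n * Real.exp (-c₂ * enorm3 (gridV Δv j) ^ α)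
          ≤ schemeF f₀ κ ν Δx Δt Δv n i j ∧
        c₁ * (κ / (κ + Anu ν * Δt)) ^ n * Real.exp (-c₂ * enorm3 (gridV Δv j) ^ α)
          ≤ schemeTilde f₀ κ ν Δx Δt Δv n i j ∧
        c₁ * Real.exp (-(Anu ν / κ) * (n * Δt)) * Real.exp (-c₂ * enorm3 (gridV Δv j) ^ α)
          ≤ c₁ * (κ / (κ + Anu ν * Δt)) ^ n * Real.exp (-c₂ * enorm3 (gridV Δv j) ^ α) := by
  have hν1 : (0:ℝ) < 1 - ν := by linarith [hν.2]
  have hA : 0 < Anu ν := by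
    unfold Anu; positivity
  have hden : 0 < κ + Anu ν * Δt := by positivity
  set r : ℝ := κ / (κ + Anu ν * Δt) with hr
  have hr0 : 0 < r := div_pos hκ hden
  have hw : 0 ≤ Anu ν * Δt / (κ + Anu ν * Δt) := by positivity
  -- main induction
  have main : ∀ k : ℕ, (∀ m < k + 1, ∀ (i : ℤ) (j : Idx3),
        0 ≤ schemeGauss f₀ κ ν Δx Δt Δv m i j) → ∀ (i : ℤ) (j : Idx3),
      c₁ * r ^ (k + 1) * Real.exp (-c₂ * enorm3 (gridV Δv j) ^ α)
          ≤ schemeF f₀ κ ν Δx Δt Δv (k + 1) i j ∧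
      c₁ * r ^ (k + 1) * Real.exp (-c₂ * enorm3 (gridV Δv j) ^ α)
          ≤ schemeTilde f₀ κ ν Δx Δt Δv (k + 1) i j := by
    intro k
    induction k with
    | zero =>
      intro hG
      have hF : ∀ (i : ℤ) (j : Idx3),
          c₁ * r ^ 1 * Real.exp (-c₂ * enorm3 (gridV Δv j) ^ α)
            ≤ schemeF f₀ κ ν Δx Δt Δv 1 i j := by
        intro i j
        have h1 : c₁ * Real.exp (-c₂ * enorm3 (gridV Δv j) ^ α) ≤ tilde0 f₀ Δx Δt Δv i j :=
          h0 i j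
        have h2 : 0 ≤ gauss0 f₀ κ ν Δx Δt Δv i j := hG 0 (by norm_num) i j
        show c₁ * r ^ 1 * _ ≤ r * tilde0 f₀ Δx Δt Δv i j
            + (Anu ν * Δt / (κ + Anu ν * Δt)) * gauss0 f₀ κ ν Δx Δt Δv i j
        have := mul_le_mul_of_nonneg_left h1 hr0.le
        nlinarith [mul_nonneg hw h2]
      intro i j
      refine ⟨hF i j, ?_⟩
      exact recon_lower Δx Δt Δv hΔx _ j _ (fun i' => hF i' j) i
    | succ k ih =>
      intro hG
      have ihk := ih (fun m hm => hG m (by omega))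
      have hF : ∀ (i : ℤ) (j : Idx3),
          c₁ * r ^ (k + 2) * Real.exp (-c₂ * enorm3 (gridV Δv j) ^ α)
            ≤ schemeF f₀ κ ν Δx Δt Δv (k + 2) i j := by
        intro i j
        have h1 := (ihk i j).2
        have h2 : 0 ≤ schemeGauss f₀ κ ν Δx Δt Δv (k + 1) i j := hG (k + 1) (by omega) i j
        show c₁ * r ^ (k + 2) * _ ≤ r * recon Δx Δt Δv (schemeF f₀ κ ν Δx Δt Δv (k + 1)) i j
            + (Anu ν * Δt / (κ + Anu ν * Δt)) *
              gaussD (nuTilde κ ν Δt) Δv (recon Δx Δt Δv (schemeF f₀ κ ν Δx Δt Δv (k + 1)) i) j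
        have h1' : c₁ * r ^ (k + 1) * Real.exp (-c₂ * enorm3 (gridV Δv j) ^ α)
            ≤ recon Δx Δt Δv (schemeF f₀ κ ν Δx Δt Δv (k + 1)) i j := h1
        have h2' : 0 ≤ gaussD (nuTilde κ ν Δt) Δv
            (recon Δx Δt Δv (schemeF f₀ κ ν Δx Δt Δv (k + 1)) i) j := h2
        have hmul := mul_le_mul_of_nonneg_left h1' hr0.le
        have : c₁ * r ^ (k + 2) * Real.exp (-c₂ * enorm3 (gridV Δv j) ^ α)
            = r * (c₁ * r ^ (k + 1) * Real.exp (-c₂ * enorm3 (gridV Δv j) ^ α)) := by ring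
        nlinarith [mul_nonneg hw h2']
      intro i j
      refine ⟨hF i j, ?_⟩
      exact recon_lower Δx Δt Δv hΔx _ j _ (fun i' => hF i' j) i
  -- third inequality
  have hthird : ∀ j : Idx3,
      c₁ * Real.exp (-(Anu ν / κ) * (n * Δt)) * Real.exp (-c₂ * enorm3 (gridV Δv j) ^ α)
        ≤ c₁ * r ^ n * Real.exp (-c₂ * enorm3 (gridV Δv j) ^ α) := by
    intro j
    have hstep : Real.exp (-(Anu ν / κ) * Δt) ≤ r := by
      have hx : 0 < Anu ν / κ * Δt := by positivity
      have he : 1 + Anu ν / κ * Δt ≤ Real.exp (Anu ν / κ * Δt) := by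
        linarith [Real.add_one_le_exp (Anu ν / κ * Δt)]
      have hrinv : r = (1 + Anu ν / κ * Δt)⁻¹ := by
        rw [hr]
        rw [eq_comm, inv_eq_iff_eq_inv, eq_comm, inv_div]
        field_simp
      rw [hrinv, show -(Anu ν / κ) * Δt = -(Anu ν / κ * Δt) by ring, Real.exp_neg]
      exact inv_anti₀ (by linarith) he
    have hpow : Real.exp (-(Anu ν / κ) * (n * Δt)) ≤ r ^ n := by
      have : Real.exp (-(Anu ν / κ) * (n * Δt)) = (Real.exp (-(Anu ν / κ) * Δt)) ^ n := by
        rw [← Real.exp_nat_mul]; ring_nf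
      rw [this]
      exact pow_le_pow_left₀ (Real.exp_nonneg _) hstep n
    have := mul_le_mul_of_nonneg_right hpow (Real.exp_nonneg (-c₂ * enorm3 (gridV Δv j) ^ α))
    nlinarith [this, hc₁.le, mul_le_mul_of_nonneg_left this hc₁.le]
  obtain ⟨k, rfl⟩ : ∃ k, n = k + 1 := ⟨n - 1, by omega⟩
  intro i j
  obtain ⟨hF, hT⟩ := main k hGauss i j
  exact ⟨hF, hT, hthird j⟩

end
end

section
/- Let q ≥ 0, Δx, Δv, Δt > 0, and grid points x_i = iΔx, v_j = jΔv ∈ ℝ³. Let F : ℝ×ℝ³ → ℝ be twice continuously differentiable in its first variable with M₂ := sup_{x,v} |∂ₓ²F(x,v)|(1+|v|)^q < ∞, and set F̃(x,v) = F(x − v₁Δt, v). Let g : ℤ×ℤ³ → ℝ be any grid function and g̃ its reconstruction. Then sup_{i∈ℤ, j∈ℤ³} |g̃_{i,j} − F̃(x_i,v_j)|(1+|v_j|)^q ≤ sup_{i∈ℤ, j∈ℤ³} |g_{i,j} − F(x_i,v_j)|(1+|v_j|)^q + M₂·(Δx)². -/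
noncomputable section

open Real MeasureTheory

lemma taylor_aux {f : ℝ → ℝ} (hf : ContDiff ℝ 2 f) {C : ℝ}
    (hC : ∀ x, |deriv (deriv f) x| ≤ C) (a b : ℝ) :
    |f b - f a - deriv f a * (b - a)| ≤ C * (b - a) ^ 2 := by
  have h2 : ContDiff ℝ ((1:WithTop ℕ∞) + 1) f := by
    convert hf using 2
    exact one_add_one_eq_two
  have hd1 : Differentiable ℝ f := (contDiff_succ_iff_deriv.mp h2).1
  have hd2 : ContDiff ℝ 1 (deriv f) := (contDiff_succ_iff_deriv.mp h2).2.2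
  have hdd : Differentiable ℝ (deriv f) := hd2.differentiable one_ne_zero
  have step1 : ∀ x, |deriv f x - deriv f a| ≤ C * |x - a| := by
    intro x
    have := convex_univ.norm_image_sub_le_of_norm_deriv_le
      (f := deriv f) (C := C) (fun y _ => hdd y) (fun y _ => hC y)
      (Set.mem_univ a) (Set.mem_univ x)
    simpa [Real.norm_eq_abs] using this
  set g : ℝ → ℝ := fun x => f x - deriv f a * x with hg
  have hg' : ∀ x, HasDerivAt g (deriv f x - deriv f a) x := by
    intro x
    have := ((hd1 x).hasDerivAt).sub ((hasDerivAt_id x).const_mul (deriv f a))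
    rw [mul_one] at this
    exact this
  have hmem : ∀ x ∈ Set.uIcc a b, |x - a| ≤ |b - a| := by
    intro x hx
    rcases le_total a b with h | h
    · rw [Set.uIcc_of_le h] at hx
      rw [abs_of_nonneg (by linarith [hx.1]), abs_of_nonneg (by linarith)]
      linarith [hx.2]
    · rw [Set.uIcc_of_ge h] at hx
      rw [abs_of_nonpos (by linarith [hx.2]), abs_of_nonpos (by linarith)]
      linarith [hx.1]
  have key := Convex.norm_image_sub_le_of_norm_hasDerivWithin_le
    (f := g) (f' := fun x => deriv f x - deriv f a) (s := Set.uIcc a b) (C := C * |b - a|)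
    (fun x _ => (hg' x).hasDerivWithinAt)
    (fun x hx => by
      have h1 := step1 x
      have h2 := hmem x hx
      have hC0 : 0 ≤ C := (abs_nonneg _).trans (hC a)
      calc ‖deriv f x - deriv f a‖ = |deriv f x - deriv f a| := rfl
        _ ≤ C * |x - a| := h1
        _ ≤ C * |b - a| := by nlinarith)
    (convex_uIcc a b) Set.left_mem_uIcc Set.right_mem_uIcc
  have : |g b - g a| ≤ C * |b - a| * |b - a| := by simpa [Real.norm_eq_abs] using key
  calc |f b - f a - deriv f a * (b - a)| = |g b - g a| := by rw [hg]; ring_nf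
    _ ≤ C * |b - a| * |b - a| := this
    _ = C * (b - a) ^ 2 := by rw [mul_assoc, ← abs_mul, abs_mul_self]; ring


set_option maxHeartbeats 1000000 in
/-- the reconstruction of a grid function approximates the shifted smooth
function with an extra `M₂(Δx)²` error in the weighted `L∞_q` norm. -/
theorem reconstruction_consistency (q Δx Δv Δt : ℝ) (hq : 0 ≤ q)
    (hΔx : 0 < Δx) (hΔv : 0 < Δv) (hΔt : 0 < Δt)
    (F : ℝ → V3 → ℝ) (hF : ∀ v : V3, ContDiff ℝ 2 (fun x => F x v))
    (M₂ : ℝ)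
    (hM₂ : ∀ (x : ℝ) (v : V3),
      |iteratedDeriv 2 (fun y => F y v) x| * (1 + enorm3 v) ^ q ≤ M₂)
    (g : ℤ → Idx3 → ℝ) (N : ℝ)
    (hN : ∀ (i : ℤ) (j : Idx3),
      |g i j - F ((i : ℝ) * Δx) (gridV Δv j)| * (1 + enorm3 (gridV Δv j)) ^ q ≤ N) :
    ∀ (i : ℤ) (j : Idx3),
      |recon Δx Δt Δv g i j - F ((i : ℝ) * Δx - gridV Δv j 0 * Δt) (gridV Δv j)|
          * (1 + enorm3 (gridV Δv j)) ^ q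
        ≤ N + M₂ * Δx ^ 2 := by
  intro i j
  set v : V3 := gridV Δv j with hv
  set w : ℝ := (1 + enorm3 v) ^ q with hwdef
  have he0 : 0 ≤ enorm3 v := Real.sqrt_nonneg _
  have hw1 : 1 ≤ w := Real.one_le_rpow (by linarith) hq
  have hw0 : 0 < w := lt_of_lt_of_le one_pos hw1
  set f : ℝ → ℝ := fun x => F x v with hfdef
  set y : ℝ := (i : ℝ) * Δx - Δt * ((j 0 : ℝ) * Δv) with hydef
  set s : ℤ := sIdx Δx Δt Δv i j with hsdef
  have hyeq : (i : ℝ) * Δx - v 0 * Δt = y := by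
    simp only [hv, gridV, hydef]; ring
  have hsle : (s : ℝ) * Δx ≤ y := by
    have := Int.floor_le (y / Δx)
    rw [hsdef, sIdx, ← hydef]
    calc (⌊y / Δx⌋ : ℝ) * Δx ≤ (y / Δx) * Δx := by
          exact mul_le_mul_of_nonneg_right this hΔx.le
      _ = y := by field_simp
  have hylt : y < ((s : ℝ) + 1) * Δx := by
    have := Int.lt_floor_add_one (y / Δx)
    rw [hsdef, sIdx, ← hydef]
    calc y = (y / Δx) * Δx := by field_simp
      _ < ((⌊y / Δx⌋ : ℝ) + 1) * Δx := by
          exact mul_lt_mul_of_pos_right this hΔx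
  set θ : ℝ := (y - (s : ℝ) * Δx) / Δx with hθdef
  have hθΔx : θ * Δx = y - (s : ℝ) * Δx := by
    rw [hθdef]; field_simp
  have hθ0 : 0 ≤ θ := div_nonneg (by linarith) hΔx.le
  have hθ1 : θ ≤ 1 := by
    rw [hθdef, div_le_one hΔx]; nlinarith
  -- second derivative bound
  have hM0 : 0 ≤ M₂ := le_trans (by positivity) (hM₂ 0 v)
  have hC : ∀ x, |deriv (deriv f) x| ≤ M₂ / w := by
    intro x
    rw [le_div_iff₀ hw0]
    have h2 : iteratedDeriv 2 (fun y => F y v) x = deriv (deriv f) x := by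
      rw [show (2:ℕ) = 1 + 1 from rfl, iteratedDeriv_succ, iteratedDeriv_one]
    have := hM₂ x v
    rw [h2] at this
    exact this
  -- Taylor remainders
  have hR1 : |f (((s:ℝ)+1) * Δx) - f y - deriv f y * (((s:ℝ)+1) * Δx - y)| ≤ (M₂ / w) * Δx ^ 2 := by
    have := taylor_aux (hF v) hC y (((s:ℝ)+1) * Δx)
    have hb : (((s:ℝ)+1) * Δx - y) ^ 2 ≤ Δx ^ 2 := by nlinarith
    have hCw : 0 ≤ M₂ / w := div_nonneg hM0 hw0.le
    calc |f (((s:ℝ)+1) * Δx) - f y - deriv f y * (((s:ℝ)+1) * Δx - y)|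
        ≤ (M₂ / w) * (((s:ℝ)+1) * Δx - y) ^ 2 := this
      _ ≤ (M₂ / w) * Δx ^ 2 := mul_le_mul_of_nonneg_left hb hCw
  have hR2 : |f ((s:ℝ) * Δx) - f y - deriv f y * ((s:ℝ) * Δx - y)| ≤ (M₂ / w) * Δx ^ 2 := by
    have := taylor_aux (hF v) hC y ((s:ℝ) * Δx)
    have hb : ((s:ℝ) * Δx - y) ^ 2 ≤ Δx ^ 2 := by nlinarith
    have hCw : 0 ≤ M₂ / w := div_nonneg hM0 hw0.le
    calc |f ((s:ℝ) * Δx) - f y - deriv f y * ((s:ℝ) * Δx - y)|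
        ≤ (M₂ / w) * ((s:ℝ) * Δx - y) ^ 2 := this
      _ ≤ (M₂ / w) * Δx ^ 2 := mul_le_mul_of_nonneg_left hb hCw
  -- grid bounds
  have hA : |g (s+1) j - f (((s:ℝ)+1) * Δx)| * w ≤ N := by
    have := hN (s+1) j
    rw [← hv, ← hwdef] at this
    convert this using 4 <;> push_cast <;> ring
  have hB : |g s j - f ((s:ℝ) * Δx)| * w ≤ N := hN s j
  -- recon identity
  have hrecon : recon Δx Δt Δv g i j = θ * g (s+1) j + (1 - θ) * g s j := by
    have hne : Δx ≠ 0 := hΔx.ne'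
    have h2 : (((s:ℝ)+1) * Δx - y) / Δx = 1 - θ := by
      rw [hθdef]; field_simp; ring
    rw [recon, ← hsdef, ← hydef, ← hθdef, h2]
  have hzero : θ * (((s:ℝ)+1) * Δx - y) + (1 - θ) * ((s:ℝ) * Δx - y) = 0 := by
    nlinarith [hθΔx]
  set A : ℝ := g (s+1) j - f (((s:ℝ)+1) * Δx) with hAdef
  set B : ℝ := g s j - f ((s:ℝ) * Δx) with hBdef
  set R1 : ℝ := f (((s:ℝ)+1) * Δx) - f y - deriv f y * (((s:ℝ)+1) * Δx - y) with hR1def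
  set R2 : ℝ := f ((s:ℝ) * Δx) - f y - deriv f y * ((s:ℝ) * Δx - y) with hR2def
  have hid : recon Δx Δt Δv g i j - f y = θ * A + (1 - θ) * B + (θ * R1 + (1 - θ) * R2) := by
    rw [hrecon, hAdef, hR1def, hBdef, hR2def]
    linear_combination (deriv f y) * hzero
  have habs : |recon Δx Δt Δv g i j - f y| ≤ θ * |A| + (1-θ) * |B| + (θ * |R1| + (1-θ) * |R2|) := by
    rw [hid]
    calc |θ * A + (1 - θ) * B + (θ * R1 + (1 - θ) * R2)|
        ≤ |θ * A + (1 - θ) * B| + |θ * R1 + (1 - θ) * R2| := abs_add_le _ _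
      _ ≤ (|θ * A| + |(1-θ) * B|) + (|θ * R1| + |(1-θ) * R2|) :=
          add_le_add (abs_add_le _ _) (abs_add_le _ _)
      _ = θ * |A| + (1-θ) * |B| + (θ * |R1| + (1-θ) * |R2|) := by
          rw [abs_mul, abs_mul, abs_mul, abs_mul,
            abs_of_nonneg hθ0, abs_of_nonneg (by linarith : (0:ℝ) ≤ 1 - θ)]
  have hgoal : |recon Δx Δt Δv g i j - f y| * w ≤ N + M₂ * Δx ^ 2 := by
    have hR1w : |R1| * w ≤ M₂ * Δx ^ 2 := by
      calc |R1| * w ≤ ((M₂ / w) * Δx ^ 2) * w := mul_le_mul_of_nonneg_right hR1 hw0.le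
        _ = M₂ * Δx ^ 2 := by field_simp
    have hR2w : |R2| * w ≤ M₂ * Δx ^ 2 := by
      calc |R2| * w ≤ ((M₂ / w) * Δx ^ 2) * w := mul_le_mul_of_nonneg_right hR2 hw0.le
        _ = M₂ * Δx ^ 2 := by field_simp
    have h1 : |recon Δx Δt Δv g i j - f y| * w
        ≤ θ * (|A| * w) + (1-θ) * (|B| * w) + (θ * (|R1| * w) + (1-θ) * (|R2| * w)) := by
      have := mul_le_mul_of_nonneg_right habs hw0.le
      calc |recon Δx Δt Δv g i j - f y| * w
          ≤ (θ * |A| + (1-θ) * |B| + (θ * |R1| + (1-θ) * |R2|)) * w := this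
        _ = θ * (|A| * w) + (1-θ) * (|B| * w) + (θ * (|R1| * w) + (1-θ) * (|R2| * w)) := by ring
    nlinarith [mul_le_mul_of_nonneg_left hA hθ0,
      mul_le_mul_of_nonneg_left hB (by linarith : (0:ℝ) ≤ 1 - θ),
      mul_le_mul_of_nonneg_left hR1w hθ0,
      mul_le_mul_of_nonneg_left hR2w (by linarith : (0:ℝ) ≤ 1 - θ)]
  rw [hyeq]
  exact hgoal


end
end
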